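/- If the regression function is additive, m(X) = Σ_k m_k(X^{(k)}), then the marginal total Sobol index dominates the total Sobol index: E[Var(m(X_{π_j}) | X^{(-j)})] ≥ E[Var(m(X) | X^{(-j)})]. -/

import Mathlib

open MeasureTheory ProbabilityTheory
open scoped ENNReal NNReal

noncomputable section

/-- The σ-algebra generated by the components of `X` other than the `j`-th. -/
def sigmaWithout {Ω : Type*} [MeasurableSpace Ω] {p : ℕ} (X : Ω → Fin p → ℝ) (j : Fin p) :
    MeasurableSpace Ω :=
  MeasurableSpace.comap (fun ω => fun k : {k : Fin p // k ≠ j} => X ω (k : Fin p)) inferInstance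

/-- `X_{π_j}` : the vector `X` with its `j`-th component replaced by `X'`. -/
def permuted {Ω : Type*} {p : ℕ} (X : Ω → Fin p → ℝ) (j : Fin p) (X' : Ω → ℝ) :
    Ω → Fin p → ℝ :=
  fun ω => Function.update (X ω) j (X' ω)

/-- If the regression function is additive, the marginal total Sobol index dominates
the total Sobol index: `E[Var(m(X_{π_j}) | X^{(-j)})] ≥ E[Var(m(X) | X^{(-j)})]`. -/
theorem marginal_total_sobol_ge_total_sobol_of_additive
    {Ω : Type*} [MeasureSpace Ω] [IsProbabilityMeasure (ℙ : Measure Ω)]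
    {p : ℕ} (j : Fin p) (X : Ω → Fin p → ℝ) (X' : Ω → ℝ)
    (mk : Fin p → ℝ → ℝ) (hmk : ∀ k, Measurable (mk k))
    (hL2 : ∀ k, MemLp (fun ω => mk k (X ω k)) 2 ℙ)
    (hX : Measurable X) (hX' : Measurable X')
    -- `X'` is an independent copy of the `j`-th component of `X`
    (hcopy : Measure.map X' ℙ = Measure.map (fun ω => X ω j) ℙ)
    (hindep : IndepFun X' X ℙ) :
    ∫ ω, ((∑ k, mk k (permuted X j X' ω k))
        - (ℙ[fun ω' => ∑ k, mk k (permuted X j X' ω' k) | sigmaWithout X j]) ω) ^ 2 ∂ℙ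
      ≥ ∫ ω, ((∑ k, mk k (X ω k))
        - (ℙ[fun ω' => ∑ k, mk k (X ω' k) | sigmaWithout X j]) ω) ^ 2 ∂ℙ := by
  classical
  -- the map generating the σ-algebra
  set φ : Ω → ({k : Fin p // k ≠ j} → ℝ) := fun ω => fun k => X ω (k : Fin p) with hφdef
  have hφ : Measurable φ :=
    measurable_pi_lambda _ fun k => (measurable_pi_apply (k : Fin p)).comp hX
  have hGle : sigmaWithout X j ≤ (inferInstance : MeasurableSpace Ω) := hφ.comap_le
  have hφG : Measurable[sigmaWithout X j] φ := Measurable.of_comap_le le_rfl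
  haveI : SigmaFinite ((ℙ : Measure Ω).trim hGle) := inferInstance
  set Y : Ω → ℝ := fun ω => mk j (X ω j) with hYdef
  set Y' : Ω → ℝ := fun ω => mk j (X' ω) with hY'def
  set S : Ω → ℝ := fun ω => ∑ k ∈ Finset.univ.erase j, mk k (X ω k) with hSdef
  -- decompositions of the sums
  have hsum1 : ∀ ω, ∑ k, mk k (X ω k) = Y ω + S ω := fun ω =>
    (Finset.add_sum_erase _ _ (Finset.mem_univ j)).symm
  have hsum2 : ∀ ω, ∑ k, mk k (permuted X j X' ω k) = Y' ω + S ω := by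
    intro ω
    rw [← Finset.add_sum_erase _ (fun k => mk k (permuted X j X' ω k)) (Finset.mem_univ j)]
    congr 1
    · simp [permuted, Y']
    · refine Finset.sum_congr rfl fun k hk => ?_
      rw [permuted, Function.update_of_ne (Finset.ne_of_mem_erase hk)]
  -- basic measurability / integrability
  have hYm : Measurable Y := (hmk j).comp ((measurable_pi_apply j).comp hX)
  have hY2 : MemLp Y 2 ℙ := hL2 j
  have hYint : Integrable Y ℙ := hY2.integrable one_le_two
  have hY'2 : MemLp Y' 2 ℙ := by
    have h1 : MemLp (mk j) 2 (Measure.map (fun ω => X ω j) ℙ) :=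
      (memLp_map_measure_iff (hmk j).aestronglyMeasurable
        ((measurable_pi_apply j).comp hX).aemeasurable).mpr (hL2 j)
    rw [← hcopy] at h1
    exact (memLp_map_measure_iff (hmk j).aestronglyMeasurable hX'.aemeasurable).mp h1
  have hY'int : Integrable Y' ℙ := hY'2.integrable one_le_two
  have hSmG : Measurable[sigmaWithout X j] S := by
    refine Finset.measurable_sum _ fun k hk => ?_
    have hkj : k ≠ j := Finset.ne_of_mem_erase hk
    exact (hmk k).comp ((measurable_pi_apply (⟨k, hkj⟩ : {k : Fin p // k ≠ j})).comp hφG)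
  have hSsm : StronglyMeasurable[sigmaWithout X j] S := hSmG.stronglyMeasurable
  have hS2 : MemLp S 2 ℙ :=
    memLp_finsetSum (Finset.univ.erase j) fun k _ => hL2 k
  have hSint : Integrable S ℙ := hS2.integrable one_le_two
  -- condExp of S is S
  have hceS : ℙ[S|sigmaWithout X j] = S := condExp_of_stronglyMeasurable hGle hSsm hSint
  -- constant c = E[Y] = E[Y']
  set c : ℝ := ∫ ω, Y ω ∂ℙ with hcdef
  have hc' : ∫ ω, Y' ω ∂ℙ = c := by
    have hgm : AEStronglyMeasurable (mk j) (Measure.map (fun ω => X ω j) ℙ) :=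
      (hmk j).aestronglyMeasurable
    have hgm' : AEStronglyMeasurable (mk j) (Measure.map X' ℙ) := by
      rw [hcopy]; exact hgm
    calc ∫ ω, Y' ω ∂ℙ = ∫ x, mk j x ∂(Measure.map X' ℙ) :=
          (integral_map hX'.aemeasurable hgm').symm
      _ = ∫ x, mk j x ∂(Measure.map (fun ω => X ω j) ℙ) := by rw [hcopy]
      _ = c := integral_map ((measurable_pi_apply j).comp hX).aemeasurable hgm
  -- condExp of Y' is the constant c
  have hceY' : ℙ[Y'|sigmaWithout X j] =ᵐ[ℙ] fun _ => c := by
    have hproj : Measurable (fun v : Fin p → ℝ => fun k : {k : Fin p // k ≠ j} => v (k : Fin p)) :=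
      measurable_pi_lambda _ fun k => measurable_pi_apply _
    have hIF : IndepFun X' φ ℙ := hindep.comp measurable_id hproj
    have hind : Indep (MeasurableSpace.comap X' inferInstance) (sigmaWithout X j) ℙ := by
      rw [IndepFun_iff_Indep] at hIF
      exact hIF
    have hsm : StronglyMeasurable[MeasurableSpace.comap X' inferInstance] Y' :=
      ((hmk j).comp (Measurable.of_comap_le le_rfl)).stronglyMeasurable
    have := condExp_indep_eq hX'.comap_le hGle hsm hind
    rw [hc'] at this
    exact this
  -- rewrite both integrands a.e.
  set Z : Ω → ℝ := ℙ[Y|sigmaWithout X j] with hZdef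
  have hRHS : ∫ ω, ((∑ k, mk k (X ω k))
      - (ℙ[fun ω' => ∑ k, mk k (X ω' k)|sigmaWithout X j]) ω) ^ 2 ∂ℙ
      = ∫ ω, (Y ω - Z ω) ^ 2 ∂ℙ := by
    refine integral_congr_ae ?_
    have hfeq : (fun ω' => ∑ k, mk k (X ω' k)) = Y + S := funext fun ω => hsum1 ω
    have h1 : ℙ[fun ω' => ∑ k, mk k (X ω' k)|sigmaWithout X j] =ᵐ[ℙ] Z + S := by
      rw [hfeq]
      exact (condExp_add hYint hSint _).trans (by rw [hceS])
    filter_upwards [h1] with ω hω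
    rw [hsum1 ω, hω]
    simp only [Pi.add_apply]
    ring
  have hLHS : ∫ ω, ((∑ k, mk k (permuted X j X' ω k))
      - (ℙ[fun ω' => ∑ k, mk k (permuted X j X' ω' k)|sigmaWithout X j]) ω) ^ 2 ∂ℙ
      = ∫ ω, (Y' ω - c) ^ 2 ∂ℙ := by
    refine integral_congr_ae ?_
    have hfeq : (fun ω' => ∑ k, mk k (permuted X j X' ω' k)) = Y' + S :=
      funext fun ω => hsum2 ω
    have h1 : ℙ[fun ω' => ∑ k, mk k (permuted X j X' ω' k)|sigmaWithout X j]
        =ᵐ[ℙ] (fun _ => c) + S := by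
      rw [hfeq]
      refine (condExp_add hY'int hSint _).trans ?_
      rw [hceS]
      exact hceY'.add (Filter.EventuallyEq.refl _ _)
    filter_upwards [h1] with ω hω
    rw [hsum2 ω, hω]
    simp only [Pi.add_apply]
    ring
  rw [hLHS, hRHS]
  -- the law of Y' equals the law of Y
  have hYY' : ∫ ω, (Y' ω - c) ^ 2 ∂ℙ = ∫ ω, (Y ω - c) ^ 2 ∂ℙ := by
    have hg : AEStronglyMeasurable (fun x : ℝ => (mk j x - c) ^ 2)
        (Measure.map (fun ω => X ω j) ℙ) :=
      (((hmk j).sub measurable_const).pow_const 2).aestronglyMeasurable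
    have hg' : AEStronglyMeasurable (fun x : ℝ => (mk j x - c) ^ 2) (Measure.map X' ℙ) := by
      rw [hcopy]; exact hg
    calc ∫ ω, (Y' ω - c) ^ 2 ∂ℙ
        = ∫ x, (mk j x - c) ^ 2 ∂(Measure.map X' ℙ) :=
          (integral_map hX'.aemeasurable hg').symm
      _ = ∫ x, (mk j x - c) ^ 2 ∂(Measure.map (fun ω => X ω j) ℙ) := by rw [hcopy]
      _ = ∫ ω, (Y ω - c) ^ 2 ∂ℙ :=
          integral_map ((measurable_pi_apply j).comp hX).aemeasurable hg
  rw [hYY']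
  -- main inequality : E[(Y - Z)^2] ≤ E[(Y - c)^2]
  by_cases hint : Integrable (fun ω => (Y ω - Z ω) ^ 2) ℙ
  swap
  · rw [integral_undef hint]
    exact integral_nonneg fun ω => sq_nonneg _
  have hZsm : AEStronglyMeasurable Z ℙ :=
    (stronglyMeasurable_condExp.mono hGle).aestronglyMeasurable
  have hW2 : MemLp (fun ω => Y ω - Z ω) 2 ℙ :=
    (memLp_two_iff_integrable_sq (hYm.aestronglyMeasurable.sub hZsm)).mpr hint
  have hZ2 : MemLp Z 2 ℙ := by
    have h := hY2.sub hW2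
    have : (Y - fun ω => Y ω - Z ω) = Z := by funext ω; simp
    rwa [this] at h
  have hg2 : MemLp (fun ω => Z ω - c) 2 ℙ := hZ2.sub (memLp_const c)
  -- cross term is zero
  have hWZint : Integrable (fun ω => (Z ω - c) * (Y ω - Z ω)) ℙ := by
    have h := (hW2.smul (φ := fun ω => Z ω - c) hg2
      (p := 2) (q := 2) (r := 1))
    rw [smul_eq_mul] at h
    exact memLp_one_iff_integrable.mp h
  have hZint : Integrable Z ℙ := integrable_condExp
  have hWint : Integrable (fun ω => Y ω - Z ω) ℙ := hYint.sub hZint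
  have hcross : ∫ ω, (Z ω - c) * (Y ω - Z ω) ∂ℙ = 0 := by
    have hgsm : StronglyMeasurable[sigmaWithout X j] (fun ω => Z ω - c) :=
      stronglyMeasurable_condExp.sub stronglyMeasurable_const
    have hpull : ℙ[(fun ω => Z ω - c) * (fun ω => Y ω - Z ω)|sigmaWithout X j]
        =ᵐ[ℙ] (fun ω => Z ω - c) * ℙ[fun ω => Y ω - Z ω|sigmaWithout X j] :=
      condExp_mul_of_stronglyMeasurable_left hgsm hWZint hWint
    have hWce : ℙ[fun ω => Y ω - Z ω|sigmaWithout X j] =ᵐ[ℙ] 0 := by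
      have h1 : ℙ[fun ω => Y ω - Z ω|sigmaWithout X j] =ᵐ[ℙ] ℙ[Y|sigmaWithout X j] - ℙ[Z|sigmaWithout X j] := condExp_sub hYint hZint _
      have h2 : ℙ[Z|sigmaWithout X j] = Z :=
        condExp_of_stronglyMeasurable hGle stronglyMeasurable_condExp hZint
      refine h1.trans ?_
      rw [h2]
      simp [hZdef]
    calc ∫ ω, (Z ω - c) * (Y ω - Z ω) ∂ℙ
        = ∫ ω, (ℙ[(fun ω => Z ω - c) * (fun ω => Y ω - Z ω)|sigmaWithout X j]) ω ∂ℙ :=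
          (integral_condExp hGle).symm
      _ = ∫ ω, (0 : ℝ) ∂ℙ := by
          refine integral_congr_ae ?_
          filter_upwards [hpull, hWce] with ω h1 h2
          simp only [Pi.mul_apply] at h1 ⊢
          rw [h1, h2]
          simp
      _ = 0 := integral_zero _ _
  -- expand the square
  have hI2 : Integrable (fun ω => 2 * ((Z ω - c) * (Y ω - Z ω))) ℙ := hWZint.const_mul 2
  have hI3 : Integrable (fun ω => (Z ω - c) ^ 2) ℙ := hg2.integrable_sq
  have hI23 : Integrable (fun ω => 2 * ((Z ω - c) * (Y ω - Z ω)) + (Z ω - c) ^ 2) ℙ :=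
    hI2.add hI3
  have hexp : ∫ ω, (Y ω - c) ^ 2 ∂ℙ
      = ∫ ω, (Y ω - Z ω) ^ 2 ∂ℙ
        + (∫ ω, 2 * ((Z ω - c) * (Y ω - Z ω)) ∂ℙ + ∫ ω, (Z ω - c) ^ 2 ∂ℙ) := by
    calc ∫ ω, (Y ω - c) ^ 2 ∂ℙ
        = ∫ ω, ((Y ω - Z ω) ^ 2 + (2 * ((Z ω - c) * (Y ω - Z ω)) + (Z ω - c) ^ 2)) ∂ℙ := by
          refine integral_congr_ae (Filter.Eventually.of_forall fun ω => ?_)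
          ring
      _ = ∫ ω, (Y ω - Z ω) ^ 2 ∂ℙ
            + ∫ ω, (2 * ((Z ω - c) * (Y ω - Z ω)) + (Z ω - c) ^ 2) ∂ℙ :=
          integral_add hint hI23
      _ = ∫ ω, (Y ω - Z ω) ^ 2 ∂ℙ
            + (∫ ω, 2 * ((Z ω - c) * (Y ω - Z ω)) ∂ℙ + ∫ ω, (Z ω - c) ^ 2 ∂ℙ) := by
          rw [integral_add hI2 hI3]
  rw [ge_iff_le, hexp]
  have h2 : ∫ ω, 2 * ((Z ω - c) * (Y ω - Z ω)) ∂ℙ = 0 := by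
    rw [integral_const_mul, hcross, mul_zero]
  rw [h2, zero_add]
  have h3 : 0 ≤ ∫ ω, (Z ω - c) ^ 2 ∂ℙ := integral_nonneg fun ω => sq_nonneg _
  linarith
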